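/- arXiv:1703.07962 — 2 statements merged into one kernel-verified Lean document; each statement's English description precedes it below -/
import Mathlib

section
/- Let Ω ⊆ ℝ² be an open set, let ψ : Ω → ℝ² be continuously differentiable on Ω, and let v : ℝ² → ℝ be smooth (C^∞) with compact support contained in Ω. Then ∫_Ω symCurl ψ(x) : ∇²v(x) dx = 0, where ∇²v is the Hessian of v. -/
noncomputable section

open MeasureTheory Matrix

/-- The plane `ℝ²` as a Euclidean space. -/
abbrev E2 := EuclideanSpace ℝ (Fin 2)

/-- Partial derivative `∂ᵢ f` of a scalar field. -/
def pd (i : Fin 2) (f : E2 → ℝ) (x : E2) : ℝ :=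
  fderiv ℝ f x (EuclideanSpace.single i 1)

/-- `Curl ψ`: the 2×2 matrix field with rows `(∂₂ψᵢ, −∂₁ψᵢ)`. -/
def CurlM (ψ : E2 → Fin 2 → ℝ) (x : E2) : Matrix (Fin 2) (Fin 2) ℝ :=
  Matrix.of fun i => ![pd 1 (fun y => ψ y i) x, -pd 0 (fun y => ψ y i) x]

/-- `symCurl ψ = ½(Curl ψ + (Curl ψ)ᵀ)`. -/
def symCurlM (ψ : E2 → Fin 2 → ℝ) (x : E2) : Matrix (Fin 2) (Fin 2) ℝ :=
  (2⁻¹ : ℝ) • (CurlM ψ x + (CurlM ψ x)ᵀ)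

/-- Row-wise divergence of a matrix field: `(Div N)ᵢ = ∂₁N_{i1} + ∂₂N_{i2}`. -/
def DivM (N : E2 → Matrix (Fin 2) (Fin 2) ℝ) (x : E2) : Fin 2 → ℝ :=
  fun i => pd 0 (fun y => N y i 0) x + pd 1 (fun y => N y i 1) x

/-- Divergence of a vector field: `div w = ∂₁w₁ + ∂₂w₂`. -/
def divV (w : E2 → Fin 2 → ℝ) (x : E2) : ℝ :=
  pd 0 (fun y => w y 0) x + pd 1 (fun y => w y 1) x

/-- `divDiv N = div (Div N)`. -/
def divDivM (N : E2 → Matrix (Fin 2) (Fin 2) ℝ) (x : E2) : ℝ :=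
  divV (fun y => DivM N y) x

/-- Hessian matrix `(∇²v)_{ij} = ∂ᵢ∂ⱼ v`. -/
def hessM (v : E2 → ℝ) (x : E2) : Matrix (Fin 2) (Fin 2) ℝ :=
  Matrix.of fun i j => pd i (fun y => pd j v y) x

/-- The Frobenius inner product `A : B = Σ_{ij} A_{ij} B_{ij}`. -/
def frob (A B : Matrix (Fin 2) (Fin 2) ℝ) : ℝ :=
  ∑ i : Fin 2, ∑ j : Fin 2, A i j * B i j

namespace SymCurlAux

open Set
open scoped Manifold

lemma contDiff_pd {f : E2 → ℝ} (hf : ContDiff ℝ (⊤ : ℕ∞) f) (j : Fin 2) :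
    ContDiff ℝ (⊤ : ℕ∞) (pd j f) := by
  have h1 : ContDiff ℝ (⊤ : ℕ∞) (fderiv ℝ f) := hf.fderiv_right (by simp)
  exact h1.clm_apply contDiff_const

lemma pd_eq_zero_of_nmem {f : E2 → ℝ} {x : E2} (h : x ∉ tsupport f) (k : Fin 2) :
    pd k f x = 0 := by
  have hev : f =ᶠ[nhds x] 0 := by
    filter_upwards [(isClosed_tsupport f).isOpen_compl.mem_nhds h] with y hy
    exact image_eq_zero_of_notMem_tsupport hy
  have : fderiv ℝ f x = 0 := by
    rw [hev.fderiv_eq]; exact fderiv_const_apply 0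
  simp [pd, this]

lemma tsupport_pd_subset (k : Fin 2) (f : E2 → ℝ) : tsupport (pd k f) ⊆ tsupport f := by
  apply closure_minimal _ (isClosed_tsupport f)
  intro x hx
  by_contra hxt
  exact hx (pd_eq_zero_of_nmem hxt k)

lemma hasCompactSupport_pd {f : E2 → ℝ} (hf : HasCompactSupport f) (k : Fin 2) :
    HasCompactSupport (pd k f) :=
  hf.of_isClosed_subset (isClosed_tsupport _) (tsupport_pd_subset k f)

lemma pd_comm {f : E2 → ℝ} (hf : ContDiff ℝ (⊤ : ℕ∞) f) (a b : Fin 2) (x : E2) :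
    pd a (pd b f) x = pd b (pd a f) x := by
  have hdf : Differentiable ℝ f := hf.differentiable (by simp)
  have h2 : ContDiff ℝ (⊤ : ℕ∞) (fderiv ℝ f) := hf.fderiv_right (by simp)
  have key : ∀ (c d : Fin 2) (y : E2),
      pd c (pd d f) y = fderiv ℝ (fderiv ℝ f) y (EuclideanSpace.single c 1)
        (EuclideanSpace.single d 1) := by
    intro c d y
    have hdd : DifferentiableAt ℝ (fderiv ℝ f) y := (h2.differentiable (by simp)) y
    have hpd : pd d f = fun z => (fderiv ℝ f z) (EuclideanSpace.single d 1) := rfl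
    rw [pd, hpd, fderiv_clm_apply hdd (differentiableAt_const _)]
    simp
  rw [key a b, key b a]
  exact second_derivative_symmetric (fun y => (hdf y).hasFDerivAt)
    ((h2.differentiable (by simp)) x).hasFDerivAt _ _

lemma integrable_mul_cs {f g : E2 → ℝ} (hf : Continuous f) (hg : Continuous g)
    (hsupp : HasCompactSupport g) : Integrable (fun x => f x * g x) := by
  exact (hf.mul hg).integrable_of_hasCompactSupport (hsupp.mul_left)

lemma continuous_pd1 {f : E2 → ℝ} (hf : ContDiff ℝ 1 f) (k : Fin 2) :
    Continuous (pd k f) :=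
  (hf.continuous_fderiv one_ne_zero).clm_apply continuous_const

/-- Integration by parts: for `f` C¹, `g` smooth compactly supported,
`∫ ∂ₖf · g = −∫ f · ∂ₖg`. -/
lemma ibp (k : Fin 2) {f g : E2 → ℝ} (hf : ContDiff ℝ 1 f) (hg : ContDiff ℝ (⊤ : ℕ∞) g)
    (hsupp : HasCompactSupport g) :
    ∫ x, pd k f x * g x = - ∫ x, f x * pd k g x := by
  have h := integral_mul_fderiv_eq_neg_fderiv_mul_of_integrable
    (μ := (volume : Measure E2)) (f := f) (g := g) (v := EuclideanSpace.single k 1)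
    (integrable_mul_cs ((hf.continuous_fderiv one_ne_zero).clm_apply continuous_const)
      hg.continuous hsupp)
    (integrable_mul_cs hf.continuous (contDiff_pd hg k).continuous (hasCompactSupport_pd hsupp k))
    (integrable_mul_cs hf.continuous hg.continuous hsupp)
    (fun x _ => hf.differentiable one_ne_zero x) (fun x _ => hg.differentiable (by simp) x)
  rw [show (fun x => f x * fderiv ℝ g x (EuclideanSpace.single k 1))
      = fun x => f x * pd k g x from rfl] at h
  rw [show (fun x => fderiv ℝ f x (EuclideanSpace.single k 1) * g x)
      = fun x => pd k f x * g x from rfl] at h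
  linarith [h]

lemma exists_cutoff {K Ω : Set E2} (hK : IsCompact K) (hΩ : IsOpen Ω) (hKΩ : K ⊆ Ω) :
    ∃ χ : E2 → ℝ, ContDiff ℝ (⊤ : ℕ∞) χ ∧ HasCompactSupport χ ∧ tsupport χ ⊆ Ω ∧
      ∃ U : Set E2, IsOpen U ∧ K ⊆ U ∧ EqOn χ 1 U := by
  obtain ⟨L, hLc, hKL, hLΩ⟩ := exists_compact_between hK hΩ hKΩ
  obtain ⟨L', hL'c, hKL', hL'L⟩ := exists_compact_between hK isOpen_interior hKL
  obtain ⟨f, hf0, hf1, -⟩ := exists_contMDiffMap_zero_one_of_isClosed (n := (⊤ : ℕ∞)) (𝓘(ℝ, E2))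
    (isOpen_interior (s := L)).isClosed_compl hL'c.isClosed
    (disjoint_left.mpr fun x hx hxL' => hx (hL'L hxL'))
  have hsupp : tsupport ⇑f ⊆ L := by
    apply closure_minimal _ hLc.isClosed
    intro x hx
    by_contra hxL
    have : x ∈ (interior L)ᶜ := fun h => hxL (interior_subset h)
    exact hx (hf0 this)
  refine ⟨⇑f, ?_, hLc.of_isClosed_subset (isClosed_tsupport _) hsupp,
    hsupp.trans hLΩ, interior L', isOpen_interior, hKL', fun x hx => hf1 (interior_subset hx)⟩
  exact f.contMDiff.contDiff

/-- the key single-row computation: for a globally `C¹` scalar field `f`,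
`∫ ∂₂f ∂ᵢ∂₁v − ∂₁f ∂ᵢ∂₂v = 0`. -/
lemma row_integral (v : E2 → ℝ) (hv : ContDiff ℝ (⊤ : ℕ∞) v) (hvsupp : HasCompactSupport v)
    {f : E2 → ℝ} (hf : ContDiff ℝ 1 f) (i : Fin 2) :
    ∫ x, (pd 1 f x * pd i (pd 0 v) x - pd 0 f x * pd i (pd 1 v) x) = 0 := by
  have hg0 : ContDiff ℝ (⊤ : ℕ∞) (pd i (pd 0 v)) := contDiff_pd (contDiff_pd hv 0) i
  have hg1 : ContDiff ℝ (⊤ : ℕ∞) (pd i (pd 1 v)) := contDiff_pd (contDiff_pd hv 1) i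
  have hcs0 : HasCompactSupport (pd i (pd 0 v)) :=
    hasCompactSupport_pd (hasCompactSupport_pd hvsupp 0) i
  have hcs1 : HasCompactSupport (pd i (pd 1 v)) :=
    hasCompactSupport_pd (hasCompactSupport_pd hvsupp 1) i
  rw [integral_sub (integrable_mul_cs (continuous_pd1 hf 1) hg0.continuous hcs0)
    (integrable_mul_cs (continuous_pd1 hf 0) hg1.continuous hcs1)]
  rw [ibp 1 hf hg0 hcs0, ibp 0 hf hg1 hcs1]
  have hsw : (fun x => f x * pd 1 (pd i (pd 0 v)) x) = fun x => f x * pd 0 (pd i (pd 1 v)) x := by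
    funext x
    congr 1
    calc pd 1 (pd i (pd 0 v)) x = pd i (pd 1 (pd 0 v)) x := pd_comm (contDiff_pd hv 0) 1 i x
      _ = pd i (pd 0 (pd 1 v)) x := by
            rw [show pd 1 (pd 0 v) = pd 0 (pd 1 v) from funext (pd_comm hv 1 0)]
      _ = pd 0 (pd i (pd 1 v)) x := (pd_comm (contDiff_pd hv 1) 0 i x).symm
  rw [hsw]
  ring

end SymCurlAux

open SymCurlAux Set

/-- For a `C¹` vector field `ψ` on an open set `Ω ⊆ ℝ²` and a smooth
compactly supported test function `v` with support in `Ω`,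
`∫_Ω symCurl ψ : ∇²v dx = 0`. -/
theorem integral_symCurl_frob_hess_eq_zero (Ω : Set E2) (hΩ : IsOpen Ω)
    (ψ : E2 → Fin 2 → ℝ) (hψ : ContDiffOn ℝ 1 ψ Ω)
    (v : E2 → ℝ) (hv : ContDiff ℝ (⊤ : ℕ∞) v)
    (hvsupp : HasCompactSupport v) (hvsub : tsupport v ⊆ Ω) :
    ∫ x in Ω, frob (symCurlM ψ x) (hessM v x) = 0 := by
  classical
  obtain ⟨χ, hχs, hχcs, hχΩ, U, hUo, hKU, hχ1⟩ := exists_cutoff hvsupp hΩ hvsub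
  set φ : E2 → Fin 2 → ℝ := fun x i => χ x * ψ x i with hφdef
  -- each component of φ is globally C¹
  have hψi : ∀ i : Fin 2, ContDiffOn ℝ 1 (fun x => ψ x i) Ω := fun i =>
    (ContinuousLinearMap.proj i : (Fin 2 → ℝ) →L[ℝ] ℝ).contDiff.comp_contDiffOn hψ
  have hφi : ∀ i : Fin 2, ContDiff ℝ 1 (fun x => φ x i) := by
    intro i
    rw [contDiff_iff_contDiffAt]
    intro x
    by_cases hx : x ∈ Ω
    · exact ((hχs.of_le (mod_cast le_top)).contDiffAt).mul ((hψi i).contDiffAt (hΩ.mem_nhds hx))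
    · have hxs : x ∉ tsupport χ := fun h => hx (hχΩ h)
      have hev : (fun y => φ y i) =ᶠ[nhds x] (fun _ => (0 : ℝ)) := by
        filter_upwards [(isClosed_tsupport χ).isOpen_compl.mem_nhds hxs] with y hy
        simp [hφdef, image_eq_zero_of_notMem_tsupport hy]
      exact (contDiffAt_const (c := (0 : ℝ))).congr_of_eventuallyEq hev
  -- the Hessian of v vanishes outside `tsupport v`
  have hhz : ∀ x, x ∉ tsupport v → hessM v x = 0 := by
    intro x hx
    ext i j
    have hxj : x ∉ tsupport (pd j v) := fun h => hx (tsupport_pd_subset j v h)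
    simpa [hessM] using pd_eq_zero_of_nmem hxj i
  -- pointwise equality of the two integrands
  have heq : ∀ x, frob (symCurlM ψ x) (hessM v x) = frob (symCurlM φ x) (hessM v x) := by
    intro x
    by_cases hx : x ∈ U
    · have h01 : ∀ (i k : Fin 2),
          pd k (fun y => φ y i) x = pd k (fun y => ψ y i) x := by
        intro i k
        have hev : (fun y => φ y i) =ᶠ[nhds x] (fun y => ψ y i) := by
          filter_upwards [hUo.mem_nhds hx] with y hy
          simp [hφdef, hχ1 hy]
        simp only [pd, hev.fderiv_eq]
      have hC : CurlM φ x = CurlM ψ x := by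
        unfold CurlM
        ext i j
        fin_cases j <;> simp [h01]
      simp [symCurlM, hC]
    · have hxv : x ∉ tsupport v := fun h => hx (hKU h)
      simp [frob, hhz x hxv]
  simp only [heq]
  -- the integrand vanishes off Ω, so pass to the whole space
  rw [setIntegral_eq_integral_of_forall_compl_eq_zero (f := fun x =>
      frob (symCurlM φ x) (hessM v x)) (fun x hx => by
    have hxv : x ∉ tsupport v := fun h => hx (hvsub h)
    simp [frob, hhz x hxv])]
  -- rewrite the integrand explicitly
  have hpt : ∀ x, frob (symCurlM φ x) (hessM v x) =
      (pd 1 (fun y => φ y 0) x * pd 0 (pd 0 v) x - pd 0 (fun y => φ y 0) x * pd 0 (pd 1 v) x)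
      + (pd 1 (fun y => φ y 1) x * pd 1 (pd 0 v) x
          - pd 0 (fun y => φ y 1) x * pd 1 (pd 1 v) x) := by
    intro x
    have hs : pd 0 (pd 1 v) x = pd 1 (pd 0 v) x := pd_comm hv 0 1 x
    simp only [frob, symCurlM, CurlM, hessM, Fin.sum_univ_two, Matrix.smul_apply,
      Matrix.add_apply, Matrix.transpose_apply, Matrix.of_apply, Matrix.cons_val_zero,
      Matrix.cons_val_one, Matrix.head_cons, smul_eq_mul]
    rw [show pd 0 (fun y => pd 1 v y) x = pd 1 (fun y => pd 0 v y) x from hs]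
    ring
  simp only [hpt]
  have hI : ∀ i : Fin 2, Integrable (fun x =>
      pd 1 (fun y => φ y i) x * pd i (pd 0 v) x - pd 0 (fun y => φ y i) x * pd i (pd 1 v) x) := by
    intro i
    exact Integrable.sub
      (integrable_mul_cs (continuous_pd1 (hφi i) 1) (contDiff_pd (contDiff_pd hv 0) i).continuous
        (hasCompactSupport_pd (hasCompactSupport_pd hvsupp 0) i))
      (integrable_mul_cs (continuous_pd1 (hφi i) 0) (contDiff_pd (contDiff_pd hv 1) i).continuous
        (hasCompactSupport_pd (hasCompactSupport_pd hvsupp 1) i))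
  rw [integral_add (hI 0) (hI 1)]
  rw [row_integral v hv hvsupp (hφi 0) 0, row_integral v hv hvsupp (hφi 1) 1]
  ring
end
end

section
/- Let Ω ⊆ ℝ² be a nonempty open connected set and let ψ : Ω → ℝ² be continuously differentiable on Ω. Then symCurl ψ(x) = 0 for all x ∈ Ω if and only if there exist a ∈ ℝ and b ∈ ℝ² such that ψ(x) = a·x + b for all x ∈ Ω (i.e. ψ is the restriction to Ω of an element of the lowest-order Raviart–Thomas space RT₀ = { x ↦ a x + b : a ∈ ℝ, b ∈ ℝ² }). -/
noncomputable section

open MeasureTheory Matrix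

lemma segConst {s : Set E2} (hs : Convex ℝ s) {g : E2 → ℝ}
    (hg : ∀ z ∈ s, DifferentiableAt ℝ g z) {v : E2}
    (hd : ∀ z ∈ s, fderiv ℝ g z v = 0) {x : E2} (c : ℝ)
    (hx : x ∈ s) (hx' : x + c • v ∈ s) :
    g (x + c • v) = g x := by
  set w := c • v with hw
  have hmem : ∀ t ∈ Set.Icc (0:ℝ) 1, x + t • w ∈ s := by
    intro t ht
    have := hs hx hx' (by linarith [ht.1, ht.2] : (0:ℝ) ≤ 1 - t) ht.1 (by ring)
    convert this using 1
    module
  have hder : ∀ t ∈ Set.Icc (0:ℝ) 1, HasDerivAt (fun t : ℝ => g (x + t • w)) 0 t := by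
    intro t ht
    have hL : HasDerivAt (fun t : ℝ => x + t • w) w t := by
      simpa using ((hasDerivAt_id t).smul_const w).const_add x
    have := ((hg _ (hmem t ht)).hasFDerivAt).comp_hasDerivAt t hL
    have hz : fderiv ℝ g (x + t • w) w = 0 := by
      rw [hw, (fderiv ℝ g (x + t • w)).map_smul, hd _ (hmem t ht)]
      simp
    rw [hz] at this; exact this
  have := constant_of_has_deriv_right_zero
    (f := fun t : ℝ => g (x + t • w))
    (fun t ht => ((hder t ht).continuousAt).continuousWithinAt)
    (fun t ht => ((hder t (Set.mem_Icc_of_Ico ht)).hasDerivWithinAt))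
    1 (Set.right_mem_Icc.2 zero_le_one)
  simpa using this

def ee (i : Fin 2) : E2 := EuclideanSpace.single i (1:ℝ)

def fixC (i : Fin 2) (c : ℝ) (x : E2) : E2 := x + (c - x i) • ee i

lemma fixC_apply (i : Fin 2) (c : ℝ) (x : E2) (j : Fin 2) :
    fixC i c x j = if j = i then c else x j := by
  rcases eq_or_ne j i with h | h
  · subst h; simp [fixC, ee, EuclideanSpace.single_apply]
  · simp [fixC, ee, EuclideanSpace.single_apply, h]

lemma fixC_dist (i : Fin 2) (p x : E2) : dist (fixC i (p i) x) p ≤ dist x p := by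
  rw [EuclideanSpace.dist_eq, EuclideanSpace.dist_eq]
  apply Real.sqrt_le_sqrt
  apply Finset.sum_le_sum
  intro j _
  rcases eq_or_ne j i with h | h
  · subst h; simp [fixC_apply]
  · simp [fixC_apply, h]

def Afix (i : Fin 2) : E2 →L[ℝ] E2 :=
  ContinuousLinearMap.id ℝ E2 - (EuclideanSpace.proj i).smulRight (ee i)

lemma hasFDerivAt_fixC (i : Fin 2) (c : ℝ) (x : E2) :
    HasFDerivAt (fixC i c) (Afix i) x := by
  have h : fixC i c = fun y => Afix i y + c • ee i := by
    funext y
    simp [fixC, Afix, sub_smul, ContinuousLinearMap.smulRight_apply]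
    module
  rw [h]
  exact (Afix i).hasFDerivAt.add_const _

lemma Afix_apply_ee (i j : Fin 2) (hj : j ≠ i) : Afix i (ee j) = ee j := by
  simp [Afix, ContinuousLinearMap.smulRight_apply, ee, EuclideanSpace.single_apply,
    hj, Ne.symm hj]

lemma fderiv_fixC {s : Set E2} (hs : IsOpen s) (hconv : Convex ℝ s) {g : E2 → ℝ}
    (hg : ∀ z ∈ s, DifferentiableAt ℝ g z) {i : Fin 2}
    (hd : ∀ z ∈ s, fderiv ℝ g z (ee i) = 0) {c : ℝ}
    (hc : ∀ x ∈ s, fixC i c x ∈ s) {x : E2} (hx : x ∈ s) :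
    ∀ w, fderiv ℝ g x w = fderiv ℝ g (fixC i c x) (Afix i w) := by
  have heq : Set.EqOn g (g ∘ fixC i c) s := by
    intro y hy
    have : g (fixC i c y) = g y :=
      segConst hconv hg hd (c - y i) hy (hc y hy)
    simp [Function.comp, this]
  have hev : g =ᶠ[nhds x] g ∘ fixC i c :=
    Filter.eventuallyEq_of_mem (hs.mem_nhds hx) heq
  have hcomp : HasFDerivAt (g ∘ fixC i c)
      ((fderiv ℝ g (fixC i c x)).comp (Afix i)) x :=
    ((hg _ (hc x hx)).hasFDerivAt).comp x (hasFDerivAt_fixC i c x)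
  intro w
  rw [hev.fderiv_eq, hcomp.fderiv, ContinuousLinearMap.comp_apply]

lemma fixC_val {s : Set E2} (hconv : Convex ℝ s) {g : E2 → ℝ}
    (hg : ∀ z ∈ s, DifferentiableAt ℝ g z) {i : Fin 2}
    (hd : ∀ z ∈ s, fderiv ℝ g z (ee i) = 0) {c : ℝ}
    {x : E2} (hx : x ∈ s) (hx' : fixC i c x ∈ s) :
    g (fixC i c x) = g x :=
  segConst hconv hg hd (c - x i) hx hx'

/-- For a `C¹` vector field `ψ` on a nonempty open connected set `Ω ⊆ ℝ²`,
`symCurl ψ = 0` on `Ω` iff `ψ` is the restriction to `Ω` of an element of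
`RT₀ = { x ↦ a x + b : a ∈ ℝ, b ∈ ℝ² }`. -/
theorem symCurl_eq_zero_iff_RT0 (Ω : Set E2) (hΩ : IsOpen Ω) (hconn : IsConnected Ω)
    (ψ : E2 → Fin 2 → ℝ) (hψ : ContDiffOn ℝ 1 ψ Ω) :
    (∀ x ∈ Ω, symCurlM ψ x = 0) ↔
      ∃ (a : ℝ) (b : Fin 2 → ℝ), ∀ x ∈ Ω, ψ x = fun i => a * x i + b i := by
  classical
  have pd_eq : ∀ (j : Fin 2) (g : E2 → ℝ) (x : E2), pd j g x = fderiv ℝ g x (ee j) := by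
    intro j g x; rfl
  have hdiffi : ∀ (i : Fin 2), ∀ x ∈ Ω, DifferentiableAt ℝ (fun y => ψ y i) x := by
    intro i x hx
    have hψd : DifferentiableAt ℝ ψ x :=
      (hψ.contDiffAt (hΩ.mem_nhds hx)).differentiableAt one_ne_zero
    exact ((ContinuousLinearMap.proj (R := ℝ) (φ := fun _ : Fin 2 => ℝ)
      i).differentiableAt).comp x hψd
  constructor
  · intro h
    set f : E2 → ℝ := pd 0 (fun y => ψ y 0) with hf
    have key : ∀ x ∈ Ω, pd 1 (fun y => ψ y 0) x = 0 ∧ pd 0 (fun y => ψ y 1) x = 0 ∧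
        pd 0 (fun y => ψ y 0) x = pd 1 (fun y => ψ y 1) x := by
      intro x hx
      have h00 := congrFun (congrFun (h x hx) 0) 0
      have h11 := congrFun (congrFun (h x hx) 1) 1
      have h01 := congrFun (congrFun (h x hx) 0) 1
      simp [symCurlM, CurlM, Matrix.transpose_apply] at h00 h11 h01
      refine ⟨h00, h11, by linarith⟩
    have hloc : ∀ p ∈ Ω, ∃ r > 0, Metric.ball p r ⊆ Ω ∧ ∀ x ∈ Metric.ball p r,
        f x = f p ∧ ∀ i, ψ x i = f p * x i + (ψ p i - f p * p i) := by
      intro p hp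
      obtain ⟨r, hr0, hrΩ⟩ := Metric.isOpen_iff.1 hΩ p hp
      set s := Metric.ball p r with hs
      have hso : IsOpen s := Metric.isOpen_ball
      have hconv : Convex ℝ s := convex_ball p r
      have hcball : ∀ (i : Fin 2), ∀ x ∈ s, fixC i (p i) x ∈ s := by
        intro i x hx
        exact lt_of_le_of_lt (fixC_dist i p x) (Metric.mem_ball.1 hx)
      have hdiffs : ∀ (i : Fin 2), ∀ z ∈ s, DifferentiableAt ℝ (fun y => ψ y i) z :=
        fun i z hz => hdiffi i z (hrΩ hz)
      have hd01 : ∀ z ∈ s, fderiv ℝ (fun y => ψ y 0) z (ee 1) = 0 := by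
        intro z hz; rw [← pd_eq]; exact (key z (hrΩ hz)).1
      have hd10 : ∀ z ∈ s, fderiv ℝ (fun y => ψ y 1) z (ee 0) = 0 := by
        intro z hz; rw [← pd_eq]; exact (key z (hrΩ hz)).2.1
      have hfix0 : ∀ x ∈ s, fixC 0 (p 0) (fixC 1 (p 1) x) = p := by
        intro x _
        ext j
        fin_cases j <;> simp [fixC_apply]
      -- f is constant on the ball
      have hfc : ∀ x ∈ s, f x = f p := by
        intro x hx
        have hm : fixC 1 (p 1) x ∈ s := hcball 1 x hx
        have h1 : f x = fderiv ℝ (fun y => ψ y 0) (fixC 1 (p 1) x) (ee 0) := by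
          rw [hf, pd_eq]
          have := fderiv_fixC hso hconv (hdiffs 0) hd01 (hcball 1) hx (ee 0)
          rwa [Afix_apply_ee 1 0 (by decide)] at this
        have h2 : fderiv ℝ (fun y => ψ y 0) (fixC 1 (p 1) x) (ee 0)
            = pd 1 (fun y => ψ y 1) (fixC 1 (p 1) x) := by
          rw [← pd_eq]; exact (key _ (hrΩ hm)).2.2
        have h3 : pd 1 (fun y => ψ y 1) (fixC 1 (p 1) x)
            = fderiv ℝ (fun y => ψ y 1) (fixC 0 (p 0) (fixC 1 (p 1) x)) (ee 1) := by
          rw [pd_eq]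
          have := fderiv_fixC hso hconv (hdiffs 1) hd10 (hcball 0) hm (ee 1)
          rwa [Afix_apply_ee 0 1 (by decide)] at this
        have h4 : fderiv ℝ (fun y => ψ y 1) (fixC 0 (p 0) (fixC 1 (p 1) x)) (ee 1) = f p := by
          have hk := (key p hp).2.2
          rw [pd_eq, pd_eq] at hk
          rw [hfix0 x hx, hf, pd_eq]
          exact hk.symm
        rw [h1, h2, h3, h4]
      refine ⟨r, hr0, hrΩ, fun x hx => ⟨hfc x hx, ?_⟩⟩
      set a := f p with ha
      intro i
      set g : E2 → ℝ := fun y => ψ y i - a * y i with hg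
      have hproj : HasFDerivAt (fun y : E2 => a * y i)
          (a • (EuclideanSpace.proj i : E2 →L[ℝ] ℝ)) x := by
        exact ((EuclideanSpace.proj i : E2 →L[ℝ] ℝ).hasFDerivAt).const_mul a
      have hgdiff : ∀ z ∈ s, DifferentiableAt ℝ g z := by
        intro z hz
        exact (hdiffs i z hz).sub
          (((EuclideanSpace.proj i : E2 →L[ℝ] ℝ).differentiableAt).const_mul a)
      have hgd : ∀ (j : Fin 2), ∀ z ∈ s, fderiv ℝ g z (ee j) = 0 := by
        intro j z hz
        have hprojz : HasFDerivAt (fun y : E2 => a * y i)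
            (a • (EuclideanSpace.proj i : E2 →L[ℝ] ℝ)) z :=
          ((EuclideanSpace.proj i : E2 →L[ℝ] ℝ).hasFDerivAt).const_mul a
        have hsub := (((hdiffs i z hz).hasFDerivAt).sub hprojz).fderiv
        have hfz : fderiv ℝ (fun y => ψ y 0) z (ee 0) = a := by
          have := hfc z hz
          rw [hf, pd_eq] at this
          exact this
        have h11z : fderiv ℝ (fun y => ψ y 1) z (ee 1) = a := by
          have hk := (key z (hrΩ hz)).2.2
          rw [pd_eq, pd_eq] at hk
          rw [← hk]
          exact hfz
        have hd01z := hd01 z hz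
        have hd10z := hd10 z hz
        rw [hg, show (fun y : E2 => ψ y i - a * y i) = ((fun y => ψ y i) - fun y => a * y i) from rfl, hsub]
        simp only [ContinuousLinearMap.sub_apply, ContinuousLinearMap.smul_apply,
          PiLp.proj_apply, smul_eq_mul]
        have hi : i = 0 ∨ i = 1 := by omega
        have hj : j = 0 ∨ j = 1 := by omega
        have e00 : (ee 0) (0 : Fin 2) = 1 := by simp [ee, EuclideanSpace.single_apply]
        have e01 : (ee 0) (1 : Fin 2) = 0 := by simp [ee, EuclideanSpace.single_apply]
        have e10 : (ee 1) (0 : Fin 2) = 0 := by simp [ee, EuclideanSpace.single_apply]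
        have e11 : (ee 1) (1 : Fin 2) = 1 := by simp [ee, EuclideanSpace.single_apply]
        rcases hi with hi | hi <;> rcases hj with hj | hj <;> subst hi <;> subst hj <;>
          simp [e00, e01, e10, e11, hfz, h11z, hd01z, hd10z]
      have e1 : g x = g (fixC 1 (p 1) x) :=
        (fixC_val hconv hgdiff (hgd 1) hx (hcball 1 x hx)).symm
      have e2 : g (fixC 1 (p 1) x) = g (fixC 0 (p 0) (fixC 1 (p 1) x)) :=
        (fixC_val hconv hgdiff (hgd 0) (hcball 1 x hx)
          (hcball 0 _ (hcball 1 x hx))).symm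
      have e3 : g x = g p := by rw [e1, e2, hfix0 x hx]
      have : ψ x i - a * x i = ψ p i - a * p i := e3
      linarith
    -- global argument via connectedness
    obtain ⟨p₀, hp₀⟩ := hconn.nonempty
    choose! r hr0 hrΩ hrloc using hloc
    set a := f p₀ with ha
    set b : Fin 2 → ℝ := fun i => ψ p₀ i - a * p₀ i with hb
    set S : Set E2 := {q | q ∈ Ω ∧ f q = a ∧ ∀ i, ψ q i = a * q i + b i} with hS
    have hSΩ : ∀ q ∈ S, q ∈ Ω := fun q hq => hq.1
    have hball : ∀ q ∈ Ω, ∀ x ∈ Metric.ball q (r q),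
        f x = f q ∧ ∀ i, ψ x i = f q * x i + (ψ q i - f q * q i) := fun q hq => hrloc q hq
    set u : Set E2 := ⋃ (q : E2) (_ : q ∈ S), Metric.ball q (r q) with hu
    set v : Set E2 := ⋃ (q : E2) (_ : q ∈ Ω \ S), Metric.ball q (r q) with hv
    have hSmem : ∀ q ∈ Ω, ∀ x ∈ Metric.ball q (r q), x ∈ S → q ∈ S := by
      intro q hq x hxb hxS
      obtain ⟨hfx, hpsix⟩ := hball q hq x hxb
      have hfq : f q = a := by rw [← hfx, hxS.2.1]
      refine ⟨hq, hfq, fun i => ?_⟩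
      have h1 := hpsix i
      have h2 := hxS.2.2 i
      rw [hfq] at h1
      -- h1 : ψ x i = a * x i + (ψ q i - a * q i); h2 : ψ x i = a * x i + b i
      have : ψ q i - a * q i = b i := by linarith
      linarith
    have hvS : ∀ x ∈ Ω, x ∈ v → x ∉ S := by
      intro x hx hxv hxS
      simp only [hv, Set.mem_iUnion] at hxv
      obtain ⟨q, hq, hxb⟩ := hxv
      exact hq.2 (hSmem q hq.1 x hxb hxS)
    have hvempty : ¬ (Ω ∩ v).Nonempty := by
      rintro ⟨z, hzΩ, hzv⟩
      -- z ∈ v; use preconnectedness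
      have husub : Ω ⊆ u ∪ v := by
        intro x hx
        by_cases hxS : x ∈ S
        · exact Or.inl (Set.mem_iUnion.2 ⟨x, Set.mem_iUnion.2
            ⟨hxS, Metric.mem_ball_self (hr0 x hx)⟩⟩)
        · exact Or.inr (Set.mem_iUnion.2 ⟨x, Set.mem_iUnion.2
            ⟨⟨hx, hxS⟩, Metric.mem_ball_self (hr0 x hx)⟩⟩)
      have huo : IsOpen u := isOpen_iUnion fun q => isOpen_iUnion fun _ => Metric.isOpen_ball
      have hvo : IsOpen v := isOpen_iUnion fun q => isOpen_iUnion fun _ => Metric.isOpen_ball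
      have hp₀S : p₀ ∈ S := ⟨hp₀, rfl, fun i => by rw [hb]; ring⟩
      have hune : (Ω ∩ u).Nonempty :=
        ⟨p₀, hp₀, Set.mem_iUnion.2 ⟨p₀, Set.mem_iUnion.2
          ⟨hp₀S, Metric.mem_ball_self (hr0 p₀ hp₀)⟩⟩⟩
      obtain ⟨w, hwΩ, hwu, hwv⟩ := hconn.isPreconnected u v huo hvo husub hune ⟨z, hzΩ, hzv⟩
      -- w ∈ u: w in ball of some q ∈ S, so w ∈ S
      simp only [hu, Set.mem_iUnion] at hwu
      obtain ⟨q, hqS, hwb⟩ := hwu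
      have hwS : w ∈ S := by
        obtain ⟨hfw, hpsiw⟩ := hball q (hSΩ q hqS) w hwb
        have hfq : f q = a := hqS.2.1
        refine ⟨hwΩ, by rw [hfw, hfq], fun i => ?_⟩
        have h1 := hpsiw i
        rw [hfq] at h1
        have h2 := hqS.2.2 i
        have : ψ q i - a * q i = b i := by linarith
        linarith
      exact hvS w hwΩ hwv hwS
    refine ⟨a, b, fun x hx => ?_⟩
    have hxS : x ∈ S := by
      by_contra hxS
      exact hvempty ⟨x, hx, Set.mem_iUnion.2 ⟨x, Set.mem_iUnion.2
        ⟨⟨hx, hxS⟩, Metric.mem_ball_self (hr0 x hx)⟩⟩⟩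
    funext i
    exact hxS.2.2 i
  · rintro ⟨a, b, hab⟩ x hx
    have hpd : ∀ i j : Fin 2, pd j (fun y => ψ y i) x = a * (ee j) i := by
      intro i j
      have hev : (fun y => ψ y i) =ᶠ[nhds x] fun y => a * y i + b i := by
        filter_upwards [hΩ.mem_nhds hx] with y hy
        rw [hab y hy]
      have h1 : HasFDerivAt (fun y : E2 => a * y i + b i)
          (a • (EuclideanSpace.proj i : E2 →L[ℝ] ℝ)) x :=
        (((EuclideanSpace.proj i : E2 →L[ℝ] ℝ).hasFDerivAt).const_mul a).add_const _
      rw [pd_eq, hev.fderiv_eq, h1.fderiv]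
      simp [ee]
    have h10 : pd 1 (fun y => ψ y 0) x = 0 := by
      rw [hpd 0 1]; simp [ee, EuclideanSpace.single_apply]
    have h01 : pd 0 (fun y => ψ y 1) x = 0 := by
      rw [hpd 1 0]; simp [ee, EuclideanSpace.single_apply]
    have h00 : pd 0 (fun y => ψ y 0) x = a := by
      rw [hpd 0 0]; simp [ee, EuclideanSpace.single_apply]
    have h11 : pd 1 (fun y => ψ y 1) x = a := by
      rw [hpd 1 1]; simp [ee, EuclideanSpace.single_apply]
    ext i j
    fin_cases i <;> fin_cases j <;>
      simp [symCurlM, CurlM, Matrix.transpose_apply, h10, h01, h00, h11]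
end
end
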